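/- Let C* > 0, let α : ℝ → ℝ be a differentiable, strictly increasing, positive function, and let S, I : [t*, ∞) → ℝ be twice differentiable functions with S(t) > 0 and I(t) > 0 for all t ≥ t*, satisfying S' = -α(I)·I·S and I' = (α(I)·S - C*)·I on [t*, ∞), and I'(t*) = 0. Then for every t₂ > t*, the number ε := C* - α(I(t₂))·S(t₂) is strictly positive and I(t) ≤ I(t₂)·exp(-ε·(t - t₂)) for all t ≥ t₂. -/

import Mathlib

open Set Filter Topology

/-- Exponential upper bound of Theorem 3.6, part (2) (the Fashion case p = 0):
under the model S' = -α(I)·I·S, I' = (α(I)·S - C*)·I with I'(t*) = 0, for every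
t₂ > t* the number ε = C* - α(I(t₂))·S(t₂) is positive and
I(t) ≤ I(t₂)·exp(-ε·(t - t₂)) for all t ≥ t₂. -/
theorem fashion_exponential_upper_bound (Cstar tstar : ℝ) (hC : 0 < Cstar)
    (α : ℝ → ℝ) (hαdiff : Differentiable ℝ α) (hαmono : StrictMono α)
    (hαpos : ∀ x, 0 < α x)
    (S I : ℝ → ℝ)
    (hSpos : ∀ t ≥ tstar, 0 < S t) (hIpos : ∀ t ≥ tstar, 0 < I t)
    (hS : ∀ t ≥ tstar, HasDerivAt S (-(α (I t)) * I t * S t) t)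
    (hI : ∀ t ≥ tstar, HasDerivAt I ((α (I t) * S t - Cstar) * I t) t)
    (hIc : deriv I tstar = 0) :
    ∀ t₂ > tstar,
      0 < Cstar - α (I t₂) * S t₂ ∧
      ∀ t ≥ t₂, I t ≤ I t₂ * Real.exp (-(Cstar - α (I t₂) * S t₂) * (t - t₂)) := by
  set u : ℝ → ℝ := fun t => α (I t) * S t with hu_def
  -- derivative of u on [tstar, ∞)
  have hu' : ∀ t ≥ tstar, HasDerivAt u
      (deriv α (I t) * ((α (I t) * S t - Cstar) * I t) * S t
        + α (I t) * (-(α (I t)) * I t * S t)) t := by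
    intro t ht
    exact (((hαdiff (I t)).hasDerivAt.comp t (hI t ht)).mul (hS t ht))
  have hucont : ContinuousOn u (Ici tstar) :=
    fun t ht => (hu' t ht).continuousAt.continuousWithinAt
  have hIcont : ContinuousOn I (Ici tstar) :=
    fun t ht => (hI t ht).continuousAt.continuousWithinAt
  have hScont : ContinuousOn S (Ici tstar) :=
    fun t ht => (hS t ht).continuousAt.continuousWithinAt
  -- u tstar = Cstar
  have hustar : u tstar = Cstar := by
    have h0 : (α (I tstar) * S tstar - Cstar) * I tstar = 0 := by
      rw [← (hI tstar le_rfl).deriv]; exact hIc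
    rcases mul_eq_zero.1 h0 with h | h
    · have := sub_eq_zero.1 h
      simpa [hu_def] using this
    · exact absurd h (ne_of_gt (hIpos tstar le_rfl))
  -- at a point where u = Cstar, the derivative of u is negative
  have hDneg : ∀ T, tstar ≤ T → u T = Cstar →
      deriv α (I T) * ((α (I T) * S T - Cstar) * I T) * S T
        + α (I T) * (-(α (I T)) * I T * S T) < 0 := by
    intro T hT h
    have h' : α (I T) * S T = Cstar := h
    rw [h', sub_self, zero_mul, mul_zero, zero_mul, zero_add]
    have h1 := hαpos (I T)
    have h2 := hIpos T hT
    have h3 := hSpos T hT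
    nlinarith [mul_pos (mul_pos (mul_pos h1 h1) h2) h3]
  -- local behaviour near a point with negative derivative
  have ev_right : ∀ T d, d < 0 → HasDerivAt u d T → ∀ᶠ x in 𝓝[>] T, u x < u T := by
    intro T d hd hder
    have hslope : ∀ᶠ x in 𝓝[≠] T, slope u T x < 0 :=
      (hasDerivAt_iff_tendsto_slope.1 hder).eventually (gt_mem_nhds hd)
    have hslope' : ∀ᶠ x in 𝓝[>] T, slope u T x < 0 :=
      hslope.filter_mono (nhdsWithin_mono T fun x hx => ne_of_gt hx)
    filter_upwards [hslope', self_mem_nhdsWithin] with x hx hx'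
    have hxT : (0:ℝ) < x - T := sub_pos.2 hx'
    have := mul_neg_of_neg_of_pos hx hxT
    rw [slope_def_field, div_mul_cancel₀ _ (ne_of_gt hxT)] at this
    linarith
  have ev_left : ∀ T d, d < 0 → HasDerivAt u d T → ∀ᶠ x in 𝓝[<] T, u T < u x := by
    intro T d hd hder
    have hslope : ∀ᶠ x in 𝓝[≠] T, slope u T x < 0 :=
      (hasDerivAt_iff_tendsto_slope.1 hder).eventually (gt_mem_nhds hd)
    have hslope' : ∀ᶠ x in 𝓝[<] T, slope u T x < 0 :=
      hslope.filter_mono (nhdsWithin_mono T fun x hx => ne_of_lt hx)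
    filter_upwards [hslope', self_mem_nhdsWithin] with x hx hx'
    have hxT : x - T < 0 := sub_neg.2 hx'
    have := mul_pos_of_neg_of_neg hx hxT
    rw [slope_def_field, div_mul_cancel₀ _ (ne_of_lt hxT)] at this
    linarith
  -- barrier argument : u stays strictly below Cstar after tstar
  have hbar : ∀ t₀ > tstar, u t₀ < Cstar := by
    intro t₀ ht₀
    by_contra hcon
    push_neg at hcon
    -- find t₁ ∈ (tstar, t₀) with u t₁ < Cstar
    have hdneg : _ := hDneg tstar le_rfl hustar
    have hev₁ : ∀ᶠ x in 𝓝[>] tstar, u x < u tstar :=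
      ev_right tstar _ hdneg (hu' tstar le_rfl)
    have hev₂ : Ioo tstar t₀ ∈ 𝓝[>] tstar := Ioo_mem_nhdsGT_of_mem ⟨le_rfl, ht₀⟩
    obtain ⟨t₁, ht₁u, ht₁mem⟩ := (hev₁.and (eventually_of_mem hev₂ fun x hx => hx)).exists
    rw [hustar] at ht₁u
    -- the first time in [t₁, t₀] where u ≥ Cstar
    set A : Set ℝ := Icc t₁ t₀ ∩ u ⁻¹' Ici Cstar with hA_def
    have hsub : Icc t₁ t₀ ⊆ Ici tstar := fun x hx => le_trans ht₁mem.1.le hx.1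
    have hA_closed : IsClosed A :=
      (hucont.mono hsub).preimage_isClosed_of_isClosed isClosed_Icc isClosed_Ici
    have hA_ne : A.Nonempty := ⟨t₀, ⟨⟨ht₁mem.2.le, le_rfl⟩, hcon⟩⟩
    have hA_bdd : BddBelow A := ⟨t₁, fun x hx => hx.1.1⟩
    set T := sInf A with hT_def
    have hTA : T ∈ A := hA_closed.csInf_mem hA_ne hA_bdd
    have hTt₁ : t₁ < T := by
      rcases lt_or_eq_of_le hTA.1.1 with h | h
      · exact h
      · exfalso; rw [← h] at hTA; exact absurd hTA.2 (not_le.2 ht₁u)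
    have hTstar : tstar < T := lt_trans ht₁mem.1 hTt₁
    have hbelow : ∀ s, t₁ ≤ s → s < T → u s < Cstar := by
      intro s hs₁ hsT
      by_contra hcon'
      push_neg at hcon'
      have : s ∈ A := ⟨⟨hs₁, le_trans hsT.le hTA.1.2⟩, hcon'⟩
      exact absurd (csInf_le hA_bdd this) (not_le.2 hsT)
    -- u T = Cstar by continuity from the left
    have huT : u T = Cstar := by
      refine le_antisymm ?_ hTA.2
      have htend : Tendsto u (𝓝[<] T) (𝓝 (u T)) :=
        ((hu' T hTstar.le).continuousAt.continuousWithinAt : ContinuousWithinAt u (Iio T) T)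
      have hev : ∀ᶠ x in 𝓝[<] T, u x ≤ Cstar := by
        filter_upwards [Ioo_mem_nhdsLT_of_mem ⟨hTt₁, le_rfl⟩] with x hx
        exact (hbelow x hx.1.le hx.2).le
      exact le_of_tendsto htend hev
    -- but then u > Cstar just to the left of T, contradiction
    have hev₃ : ∀ᶠ x in 𝓝[<] T, u T < u x :=
      ev_left T _ (hDneg T hTstar.le huT) (hu' T hTstar.le)
    have hev₄ : Ioo t₁ T ∈ 𝓝[<] T := Ioo_mem_nhdsLT_of_mem ⟨hTt₁, le_rfl⟩
    obtain ⟨x, hx₁, hx₂⟩ := (hev₃.and (eventually_of_mem hev₄ fun x hx => hx)).exists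
    have := hbelow x hx₂.1.le hx₂.2
    rw [huT] at hx₁
    linarith
  -- S and I are antitone on [tstar, ∞)
  have hSanti : AntitoneOn S (Ici tstar) := by
    refine antitoneOn_of_deriv_nonpos (convex_Ici tstar) hScont ?_ ?_
    · intro x hx
      rw [interior_Ici] at hx
      exact (hS x hx.le).differentiableAt.differentiableWithinAt
    · intro x hx
      rw [interior_Ici] at hx
      rw [(hS x hx.le).deriv]
      have h1 := hαpos (I x); have h2 := hIpos x hx.le; have h3 := hSpos x hx.le
      nlinarith [mul_pos (mul_pos h1 h2) h3]
  have hIanti : AntitoneOn I (Ici tstar) := by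
    refine antitoneOn_of_deriv_nonpos (convex_Ici tstar) hIcont ?_ ?_
    · intro x hx
      rw [interior_Ici] at hx
      exact (hI x hx.le).differentiableAt.differentiableWithinAt
    · intro x hx
      rw [interior_Ici] at hx
      rw [(hI x hx.le).deriv]
      have h1 : α (I x) * S x < Cstar := hbar x hx
      have h2 := hIpos x hx.le
      nlinarith [mul_lt_mul_of_pos_right h1 h2]
  -- main conclusion
  intro t₂ ht₂
  have hε : 0 < Cstar - α (I t₂) * S t₂ := sub_pos.2 (hbar t₂ ht₂)
  refine ⟨hε, ?_⟩
  set ε := Cstar - α (I t₂) * S t₂ with hε_def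
  have humono : ∀ t ≥ t₂, u t ≤ u t₂ := by
    intro t ht
    have htst : tstar ≤ t := le_trans ht₂.le ht
    have h1 : I t ≤ I t₂ := hIanti ht₂.le htst ht
    have h3 : S t ≤ S t₂ := hSanti ht₂.le htst ht
    exact mul_le_mul (hαmono.monotone h1) h3 (hSpos t htst).le (hαpos _).le
  set J : ℝ → ℝ := fun t => I t * Real.exp (ε * (t - t₂)) with hJ_def
  have hJ' : ∀ t ≥ t₂, HasDerivAt J
      (((α (I t) * S t - Cstar) * I t) * Real.exp (ε * (t - t₂))
        + I t * (Real.exp (ε * (t - t₂)) * ε)) t := by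
    intro t ht
    have hlin : HasDerivAt (fun s => ε * (s - t₂)) ε t := by
      simpa using ((hasDerivAt_id t).sub_const t₂).const_mul ε
    exact (hI t (le_trans ht₂.le ht)).mul hlin.exp
  have hJanti : AntitoneOn J (Ici t₂) := by
    refine antitoneOn_of_deriv_nonpos (convex_Ici t₂)
      (fun x hx => (hJ' x hx).continuousAt.continuousWithinAt) ?_ ?_
    · intro x hx
      rw [interior_Ici] at hx
      exact (hJ' x hx.le).differentiableAt.differentiableWithinAt
    · intro x hx
      rw [interior_Ici] at hx
      rw [(hJ' x hx.le).deriv]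
      have h1 : u x ≤ u t₂ := humono x hx.le
      have h2 : 0 < I x := hIpos x (le_trans ht₂.le hx.le)
      have h3 : (0:ℝ) < Real.exp (ε * (x - t₂)) := Real.exp_pos _
      have h4 : α (I x) * S x ≤ α (I t₂) * S t₂ := h1
      have key : (α (I x) * S x - Cstar) + ε ≤ 0 := by rw [hε_def]; linarith
      nlinarith [mul_nonneg (mul_nonneg h2.le h3.le) (neg_nonneg.2 key)]
  intro t ht
  have hJt : J t ≤ J t₂ := hJanti (mem_Ici.2 le_rfl) ht ht
  have hJt₂ : J t₂ = I t₂ := by simp [hJ_def]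
  have hIt : I t = J t * Real.exp (-(ε * (t - t₂))) := by
    rw [hJ_def]
    simp [mul_assoc, ← Real.exp_add]
  have : I t ≤ I t₂ * Real.exp (-(ε * (t - t₂))) := by
    rw [hIt]
    exact mul_le_mul_of_nonneg_right (hJt₂ ▸ hJt) (Real.exp_pos _).le
  simpa [neg_mul] using this
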